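/- A nondegenerate convex reflector is uniquely determined by its focal function: if R = ∂B is a nondegenerate convex reflector with focal function p, then B = {X ∈ ℝ^{n+1} : ‖X‖ − ⟨X,y⟩ ≤ p(y) for all y ∈ Sⁿ}, i.e. B coincides with the intersection of the solid paraboloids bounded by its supporting paraboloids. -/
import Mathlib


open scoped InnerProductSpace ENNReal
open Metric Set

noncomputable section

/-- Euclidean space `ℝ^{n+1}`. -/
abbrev E (n : ℕ) : Type := EuclideanSpace ℝ (Fin (n + 1))

/-- The unit sphere `Sⁿ` centered at the origin in `ℝ^{n+1}`. -/
def sph (n : ℕ) : Set (E n) := Metric.sphere (0 : E n) 1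

/-- `B` is the convex body of a nondegenerate convex reflector: `B` is the intersection of the
solid confocal paraboloids `{X : ‖X‖ - ⟪X,y⟫ ≤ p̃ y}` for some `p̃ : Sⁿ → (0,∞]`
(encoded via `ENNReal`), `B` is compact and the origin is an interior point of `B`.
The reflector itself is `R = frontier B`. -/
def IsReflectorBody (n : ℕ) (B : Set (E n)) : Prop :=
  IsCompact B ∧ (0 : E n) ∈ interior B ∧
    ∃ pt : E n → ℝ≥0∞, (∀ y ∈ sph n, 0 < pt y) ∧
      B = {X : E n | ∀ y ∈ sph n, ENNReal.ofReal (‖X‖ - ⟪X, y⟫_ℝ) ≤ pt y}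

/-- The focal function `p(y) = sup_{X ∈ B} (‖X‖ - ⟪X, y⟫)` of the reflector `∂B`. -/
def focal (n : ℕ) (B : Set (E n)) (y : E n) : ℝ :=
  sSup ((fun X => ‖X‖ - ⟪X, y⟫_ℝ) '' B)

/-- The radial function `ρ(x) = sup {λ ≥ 0 : λ x ∈ B}`. -/
def radial (n : ℕ) (B : Set (E n)) (x : E n) : ℝ :=
  sSup {l : ℝ | 0 ≤ l ∧ l • x ∈ B}

/-- The support function `h(U) = sup_{X ∈ B} ⟪X, U⟫`. -/
def suppFn (n : ℕ) (B : Set (E n)) (U : E n) : ℝ :=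
  sSup ((fun X => ⟪X, U⟫_ℝ) '' B)

/-- The extended focal function `P(Y) = sup_{X ∈ B} (‖X‖‖Y‖ - ⟪X, Y⟫)` on all of `ℝ^{n+1}`. -/
def extFocal (n : ℕ) (B : Set (E n)) (Y : E n) : ℝ :=
  sSup ((fun X => ‖X‖ * ‖Y‖ - ⟪X, Y⟫_ℝ) '' B)

/-- The directrix `D(R) = {X - ‖X‖y : X ∈ R, y ∈ Sⁿ, ‖X‖ - ⟪X,y⟫ = p(y)}` of the
reflector `R = frontier B`. -/
def directrix (n : ℕ) (B : Set (E n)) : Set (E n) :=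
  {Z : E n | ∃ X ∈ frontier B, ∃ y ∈ sph n,
    ‖X‖ - ⟪X, y⟫_ℝ = focal n B y ∧ Z = X - ‖X‖ • y}

/-- A nondegenerate convex reflector is uniquely determined by its focal function:
`B` coincides with the intersection of the solid paraboloids bounded by its supporting
paraboloids, i.e. `B = {X : ‖X‖ - ⟪X,y⟫ ≤ p(y) for all y ∈ Sⁿ}`. -/
theorem statement1 (n : ℕ) (hn : 1 ≤ n) (B : Set (E n)) (hB : IsReflectorBody n B) :
    B = {X : E n | ∀ y ∈ sph n, ‖X‖ - ⟪X, y⟫_ℝ ≤ focal n B y} := by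
  obtain ⟨hcomp, hint, pt, hpt, hBeq⟩ := hB
  have h0B : (0 : E n) ∈ B := interior_subset hint
  ext X
  constructor
  · intro hX y hy
    refine le_csSup ?_ ⟨X, hX, rfl⟩
    exact (hcomp.image (continuous_norm.sub (continuous_id.inner continuous_const))).bddAbove
  · intro hX
    rw [hBeq]
    intro y hy
    by_cases hfin : pt y = ⊤
    · simp [hfin]
    · have hfocal : focal n B y ≤ (pt y).toReal := by
        refine Real.sSup_le ?_ ENNReal.toReal_nonneg
        rintro _ ⟨Z, hZ, rfl⟩
        rw [hBeq] at hZ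
        exact (ENNReal.ofReal_le_iff_le_toReal hfin).mp (hZ y hy)
      exact (ENNReal.ofReal_le_iff_le_toReal hfin).mpr ((hX y hy).trans hfocal)
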